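/- The minimal polynomial over ℚ of the real number 2·cos(π/20) = 2·cos(2π/40) equals X^8 − 8·X^6 + 19·X^4 − 12·X^2 + 1. (This is the minimal polynomial Ψ_{2pq} relevant to the {p,q} = {5,4} hyperbolic tessellation, of degree φ(40)/2 = 8.) -/

import Mathlib

open Real Polynomial IntermediateField

private noncomputable def pQ : ℚ[X] := X ^ 8 - 8 * X ^ 6 + 19 * X ^ 4 - 12 * X ^ 2 + 1

private lemma pQ_monic : pQ.Monic := by unfold pQ; monicity!

private lemma pQ_natDegree : pQ.natDegree = 8 := by unfold pQ; compute_degree!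

private lemma aeval_pQ {A : Type*} [CommRing A] [Algebra ℚ A] (x : A) :
    aeval x pQ = x ^ 8 - 8 * x ^ 6 + 19 * x ^ 4 - 12 * x ^ 2 + 1 := by
  simp [pQ, map_ofNat]

private lemma root_real : (2 * Real.cos (π/20)) ^ 8 - 8 * (2 * Real.cos (π/20)) ^ 6
    + 19 * (2 * Real.cos (π/20)) ^ 4 - 12 * (2 * Real.cos (π/20)) ^ 2 + 1 = 0 := by
  have h1 := Real.cos_two_mul (π/20)
  have h2 := Real.cos_two_mul (π/10)
  rw [show 2*(π/20) = π/10 by ring] at h1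
  rw [show 2*(π/10) = π/5 by ring] at h2
  rw [h1] at h2
  have hq := Real.quadratic_root_cos_pi_div_five
  set a := Real.cos (π/20)
  set c := Real.cos (π/5)
  linear_combination hq + (-4*c - 4*(2*(2*a^2-1)^2-1) + 2) * h2

private lemma totient40 : Nat.totient 40 = 16 := by decide

set_option maxHeartbeats 1000000 in
set_option synthInstance.maxHeartbeats 1000000 in
theorem minpoly_two_cos_pi_div_twenty :
    minpoly ℚ (2 * Real.cos (π / 20)) =
      X ^ 8 - 8 * X ^ 6 + 19 * X ^ 4 - 12 * X ^ 2 + 1 := by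
  set x : ℝ := 2 * Real.cos (π / 20) with hx
  set ζ : ℂ := Complex.exp (2 * ↑π * Complex.I / ((40 : ℕ) : ℂ)) with hζdef
  have hprim : IsPrimitiveRoot ζ 40 := Complex.isPrimitiveRoot_exp 40 (by norm_num)
  have hζ0 : ζ ≠ 0 := Complex.exp_ne_zero _
  set y : ℂ := ζ + ζ⁻¹ with hydef
  have h1 : ζ = Complex.exp (((π : ℂ)/20) * Complex.I) := by
    rw [hζdef]; congr 1; push_cast; ring
  have h2 : ζ⁻¹ = Complex.exp (-(((π : ℂ)/20) * Complex.I)) := by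
    rw [h1, ← Complex.exp_neg]
  have hxy : ((x : ℝ) : ℂ) = y := by
    rw [hydef, h2, h1, hx]
    push_cast
    rw [Complex.two_cos]
    congr 2
    ring
  have hyroot : aeval y pQ = 0 := by
    rw [← hxy, aeval_pQ]
    exact_mod_cast root_real
  have hxroot : aeval x pQ = 0 := by rw [aeval_pQ]; exact root_real
  have hyint : IsIntegral ℚ y := ⟨pQ, pQ_monic, by rwa [← aeval_def]⟩
  have hxint : IsIntegral ℚ x := ⟨pQ, pQ_monic, by rwa [← aeval_def]⟩
  have hminxy : minpoly ℚ y = minpoly ℚ x := by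
    rw [← hxy]
    exact minpoly.algHom_eq (Complex.ofRealAm.restrictScalars ℚ) Complex.ofReal_injective x
  -- the field A = ℚ(y)
  have hAfin : FiniteDimensional ℚ ℚ⟮y⟯ := adjoin.finiteDimensional hyint
  have hArank : Module.finrank ℚ ℚ⟮y⟯ = (minpoly ℚ y).natDegree := adjoin.finrank hyint
  -- ζ is quadratic over A
  set g : Polynomial ℚ⟮y⟯ := X ^ 2 - C (AdjoinSimple.gen ℚ y) * X + 1 with hg
  have hgmonic : g.Monic := by rw [hg]; monicity!
  have hgdeg : g.natDegree = 2 := by rw [hg]; compute_degree!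
  have hgev : aeval ζ g = 0 := by
    rw [hg]
    simp only [map_add, map_sub, map_mul, map_pow, aeval_X, map_one, aeval_C,
      IntermediateField.AdjoinSimple.algebraMap_gen]
    rw [hydef]
    field_simp
    ring
  have hζintA : IsIntegral ℚ⟮y⟯ ζ := ⟨g, hgmonic, by rwa [← aeval_def]⟩
  have hABfin : FiniteDimensional ℚ⟮y⟯ ℚ⟮y⟯⟮ζ⟯ := adjoin.finiteDimensional hζintA
  have hABrank : Module.finrank ℚ⟮y⟯ ℚ⟮y⟯⟮ζ⟯ ≤ 2 := by
    rw [adjoin.finrank hζintA, ← hgdeg]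
    exact natDegree_le_of_dvd (minpoly.dvd _ ζ hgev) hgmonic.ne_zero
  have hmul : Module.finrank ℚ ℚ⟮y⟯ * Module.finrank ℚ⟮y⟯ ℚ⟮y⟯⟮ζ⟯
      = Module.finrank ℚ ℚ⟮y⟯⟮ζ⟯ := Module.finrank_mul_finrank ℚ ℚ⟮y⟯ ℚ⟮y⟯⟮ζ⟯
  -- degree of ζ over ℚ is 16
  have hζQint : IsIntegral ℚ ζ := ⟨X ^ 40 - 1, by monicity!, by
    rw [← aeval_def]; simp [hprim.pow_eq_one]⟩
  have hQζrank : Module.finrank ℚ ℚ⟮ζ⟯ = 16 := by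
    rw [adjoin.finrank hζQint, ← Polynomial.cyclotomic_eq_minpoly_rat hprim (by norm_num),
      natDegree_cyclotomic, totient40]
  have hsub : (ℚ⟮ζ⟯ : IntermediateField ℚ ℂ) ≤ restrictScalars ℚ ℚ⟮y⟯⟮ζ⟯ := by
    rw [adjoin_le_iff]
    exact Set.singleton_subset_iff.mpr (mem_adjoin_simple_self ℚ⟮y⟯ ζ)
  have hfinB : FiniteDimensional ℚ (restrictScalars ℚ ℚ⟮y⟯⟮ζ⟯) :=
    Module.Finite.trans (R := ℚ) ℚ⟮y⟯ ℚ⟮y⟯⟮ζ⟯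
  have h16 : 16 ≤ Module.finrank ℚ (restrictScalars ℚ ℚ⟮y⟯⟮ζ⟯) := by
    rw [← hQζrank]
    exact LinearMap.finrank_le_finrank_of_injective
      (f := (IntermediateField.inclusion hsub).toLinearMap) (IntermediateField.inclusion hsub).injective
  have hfr : Module.finrank ℚ (restrictScalars ℚ ℚ⟮y⟯⟮ζ⟯) = Module.finrank ℚ ℚ⟮y⟯⟮ζ⟯ := rfl
  have hdeg8 : 8 ≤ (minpoly ℚ y).natDegree := by
    rw [← hArank]
    nlinarith [hmul, hABrank, h16, hfr]
  have hdvd : minpoly ℚ x ∣ pQ := minpoly.dvd ℚ x hxroot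
  have hfinal : minpoly ℚ x = pQ := by
    refine eq_of_dvd_of_natDegree_le_of_leadingCoeff hdvd ?_ ?_
    · rw [pQ_natDegree, ← hminxy]; exact hdeg8
    · rw [(minpoly.monic hxint).leadingCoeff, pQ_monic.leadingCoeff]
  rw [hfinal, pQ]
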